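/- For Rule 37 and Rule 45 on a ring of size n, the two rules have exactly the same set of parallel fixed points, namely the three rotations of (001)^{n/3} when 3 divides n, and no fixed points otherwise. -/
import Mathlib


/-- Single-cell update: replace the state of cell `i` by the local rule applied
to its neighborhood on the ring `ZMod n`. -/
def eupdate (n : ℕ) (f : Bool → Bool → Bool → Bool) (x : ZMod n → Bool) (i : ZMod n) :
    ZMod n → Bool :=
  Function.update x i (f (x (i - 1)) (x i) (x (i + 1)))

/-- Synchronous (parallel) step. -/
def parStep (n : ℕ) (f : Bool → Bool → Bool → Bool) (x : ZMod n → Bool) : ZMod n → Bool :=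
  fun i => f (x (i - 1)) (x i) (x (i + 1))

/-- `x` is a fixed point of the parallel dynamics. -/
def IsFixedConfig (n : ℕ) (f : Bool → Bool → Bool → Bool) (x : ZMod n → Bool) : Prop :=
  ∀ i : ZMod n, f (x (i - 1)) (x i) (x (i + 1)) = x i

/-- One full sequential step under the sequential update mode `μ`
(a permutation of the cells): update cells one at a time in the order
`μ 0, μ 1, …, μ (n-1)`. -/
def seqStep (n : ℕ) (f : Bool → Bool → Bool → Bool) (μ : Fin n ≃ ZMod n)
    (x : ZMod n → Bool) : ZMod n → Bool :=
  (List.finRange n).foldl (fun y k => eupdate n f y (μ k)) x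

/-- One full sequential step under the descending order `(n-1, n-2, …, 0)`. -/
def seqStepDesc (n : ℕ) (f : Bool → Bool → Bool → Bool) (x : ZMod n → Bool) : ZMod n → Bool :=
  ((List.range n).reverse).foldl (fun y k => eupdate n f y (k : ZMod n)) x

/-- One full sequential step under the ascending order `(0, 1, …, n-1)`. -/
def seqStepAsc (n : ℕ) (f : Bool → Bool → Bool → Bool) (x : ZMod n → Bool) : ZMod n → Bool :=
  (List.range n).foldl (fun y k => eupdate n f y (k : ZMod n)) x

def rule37 : Bool → Bool → Bool → Bool
  | true, true, true => false
  | true, true, false => false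
  | true, false, true => true
  | true, false, false => false
  | false, true, true => false
  | false, true, false => true
  | false, false, true => false
  | false, false, false => true

def rule45 : Bool → Bool → Bool → Bool
  | true, true, true => false
  | true, true, false => false
  | true, false, true => true
  | true, false, false => false
  | false, true, true => true
  | false, true, false => true
  | false, false, true => false
  | false, false, false => true


/-- "Exactly one of `a`, `b`, `c` is true". -/
def E3 (a b c : Bool) : Bool :=
  (a && !b && !c) || (!a && b && !c) || (!a && !b && c)

lemma rule37_char (n : ℕ) (x : ZMod n → Bool) :
    IsFixedConfig n rule37 x ↔ ∀ i : ZMod n, E3 (x i) (x (i+1)) (x (i+2)) = true := by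
  constructor
  · intro h i
    have h0 := h (i+1)
    have e1 : i + 1 - 1 = i := by ring
    have e2 : i + 1 + 1 = i + 2 := by ring
    rw [e1, e2] at h0
    revert h0
    cases x i <;> cases x (i+1) <;> cases x (i+2) <;> decide
  · intro h i
    have h0 := h (i - 1)
    have e1 : i - 1 + 1 = i := by ring
    have e2 : i - 1 + 2 = i + 1 := by ring
    rw [e1, e2] at h0
    revert h0
    cases x (i-1) <;> cases x i <;> cases x (i+1) <;> decide

lemma rule45_char (n : ℕ) (x : ZMod n → Bool) :
    IsFixedConfig n rule45 x ↔ ∀ i : ZMod n, E3 (x i) (x (i+1)) (x (i+2)) = true := by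
  constructor
  · intro h i
    have ha := h (i+1)
    have hb := h (i+2)
    have e1 : i + 1 - 1 = i := by ring
    have e2 : i + 1 + 1 = i + 2 := by ring
    have e3 : i + 2 - 1 = i + 1 := by ring
    have e4 : i + 2 + 1 = i + 3 := by ring
    rw [e1, e2] at ha
    rw [e3, e4] at hb
    revert ha hb
    cases x i <;> cases x (i+1) <;> cases x (i+2) <;> cases x (i+3) <;> decide
  · intro h i
    have h0 := h (i - 1)
    have e1 : i - 1 + 1 = i := by ring
    have e2 : i - 1 + 2 = i + 1 := by ring
    rw [e1, e2] at h0
    revert h0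
    cases x (i-1) <;> cases x i <;> cases x (i+1) <;> decide

lemma E3_step3 {n : ℕ} {x : ZMod n → Bool}
    (hQ : ∀ i : ZMod n, E3 (x i) (x (i+1)) (x (i+2)) = true) (i : ZMod n) :
    x (i + 3) = x i := by
  have h1 := hQ i
  have h2 := hQ (i+1)
  have e1 : i + 1 + 1 = i + 2 := by ring
  have e2 : i + 1 + 2 = i + 3 := by ring
  rw [e1, e2] at h2
  revert h1 h2
  cases x i <;> cases x (i+1) <;> cases x (i+2) <;> cases x (i+3) <;> decide

lemma E3_periodic {n : ℕ} {x : ZMod n → Bool}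
    (hQ : ∀ i : ZMod n, E3 (x i) (x (i+1)) (x (i+2)) = true) :
    ∀ (m : ℕ) (i : ZMod n), x (i + ((3*m : ℕ) : ZMod n)) = x i := by
  intro m
  induction m with
  | zero => simp
  | succ m ih =>
    intro i
    have e : ((3*(m+1) : ℕ) : ZMod n) = ((3*m : ℕ) : ZMod n) + 3 := by push_cast; ring
    rw [e, ← add_assoc, E3_step3 hQ, ih]

lemma E3_iff_form (n : ℕ) (hn : 0 < n) (x : ZMod n → Bool) :
    (∀ i : ZMod n, E3 (x i) (x (i+1)) (x (i+2)) = true) ↔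
      (3 ∣ n ∧ ∃ k < 3, ∀ i : ZMod n, x i = decide ((i.val + k) % 3 = 2)) := by
  haveI : NeZero n := ⟨hn.ne'⟩
  constructor
  · intro hQ
    by_cases h3 : 3 ∣ n
    · refine ⟨h3, ?_⟩
      have hn3 : 3 ≤ n := Nat.le_of_dvd hn h3
      -- x depends only on val % 3
      have hbase : ∀ i : ZMod n, x i = x (((i.val % 3 : ℕ) : ZMod n)) := by
        intro i
        have hv : i = ((i.val % 3 : ℕ) : ZMod n) + ((3 * (i.val / 3) : ℕ) : ZMod n) := by
          rw [← Nat.cast_add, Nat.mod_add_div, ZMod.natCast_val, ZMod.cast_id]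
        conv_lhs => rw [hv]
        exact E3_periodic hQ _ _
      have hQ0 := hQ 0
      have e1 : (0 : ZMod n) + 1 = 1 := by ring
      have e2 : (0 : ZMod n) + 2 = 2 := by ring
      rw [e1, e2] at hQ0
      have key : ∀ k < 3, (∀ r : ℕ, r < 3 → x ((r : ℕ) : ZMod n) = decide ((r + k) % 3 = 2)) →
          ∃ k < 3, ∀ i : ZMod n, x i = decide ((i.val + k) % 3 = 2) := by
        intro k hk hr
        refine ⟨k, hk, fun i => ?_⟩
        rw [hbase i]
        have h1 : (i.val + k) % 3 = (i.val % 3 + k) % 3 := by omega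
        rw [h1]
        exact hr _ (Nat.mod_lt _ (by norm_num))
      have c0 : ((0 : ℕ) : ZMod n) = 0 := by norm_num
      have c1 : ((1 : ℕ) : ZMod n) = 1 := by norm_num
      have c2 : ((2 : ℕ) : ZMod n) = 2 := by norm_num
      -- case on the three possibilities for which of x 0, x 1, x 2 is true
      revert hQ0
      cases hx0 : x 0 <;> cases hx1 : x 1 <;> cases hx2 : x 2 <;> intro hQ0 <;>
        simp [E3] at hQ0
      · -- x 2 = true : k = 0
        refine key 0 (by norm_num) ?_
        intro r hr
        interval_cases r <;> simp [c0, c1, c2, hx0, hx1, hx2]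
      · -- x 1 = true : k = 1
        refine key 1 (by norm_num) ?_
        intro r hr
        interval_cases r <;> simp [c0, c1, c2, hx0, hx1, hx2]
      · -- x 0 = true : k = 2
        refine key 2 (by norm_num) ?_
        intro r hr
        interval_cases r <;> simp [c0, c1, c2, hx0, hx1, hx2]
    · exfalso
      -- 3 is invertible mod n, so x is constant, contradiction
      have hcop : Nat.Coprime 3 n := (Nat.Prime.coprime_iff_not_dvd (by norm_num)).mpr h3
      set u : (ZMod n)ˣ := ZMod.unitOfCoprime 3 hcop with hudef
      have h3u : (3 : ZMod n) = (u : ZMod n) := by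
        have := ZMod.coe_unitOfCoprime 3 hcop
        rw [hudef]
        exact_mod_cast this.symm
      set v : ZMod n := ((u⁻¹ : (ZMod n)ˣ) : ZMod n) with hv
      have hone : ((3 * v.val : ℕ) : ZMod n) = 1 := by
        push_cast
        rw [ZMod.natCast_val, ZMod.cast_id, h3u, hv]
        exact u.mul_inv
      have hshift : ∀ i : ZMod n, x (i + 1) = x i := by
        intro i
        have := E3_periodic hQ v.val i
        rwa [hone] at this
      have h1 : x ((0:ZMod n) + 1) = x 0 := hshift 0
      have h2 : x ((0:ZMod n) + 2) = x 0 := by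
        have := hshift ((0:ZMod n)+1)
        rw [h1] at this
        have e : (0:ZMod n) + 1 + 1 = 0 + 2 := by ring
        rwa [e] at this
      have := hQ 0
      rw [h1, h2] at this
      revert this
      cases x 0 <;> decide
  · rintro ⟨h3, k, hk, hx⟩
    have hn3 : 3 ≤ n := Nat.le_of_dvd hn h3
    haveI : Fact (1 < n) := ⟨by omega⟩
    have hval : ∀ j : ZMod n, (j + 1).val % 3 = (j.val + 1) % 3 := by
      intro j
      rw [ZMod.val_add, ZMod.val_one]
      have := Nat.mod_mod_of_dvd (j.val + 1) h3
      omega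
    intro i
    have e : i + 2 = (i + 1) + 1 := by ring
    have hb := hval i
    have hc := hval (i + 1)
    rw [e, hx i, hx (i+1), hx (i+1+1)]
    have hcase :
        ((i.val + k) % 3 = 2 ∧ ¬((i+1).val + k) % 3 = 2 ∧ ¬((i+1+1).val + k) % 3 = 2) ∨
        (¬(i.val + k) % 3 = 2 ∧ ((i+1).val + k) % 3 = 2 ∧ ¬((i+1+1).val + k) % 3 = 2) ∨
        (¬(i.val + k) % 3 = 2 ∧ ¬((i+1).val + k) % 3 = 2 ∧ ((i+1+1).val + k) % 3 = 2) := by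
      omega
    rcases hcase with ⟨a, b, c⟩ | ⟨a, b, c⟩ | ⟨a, b, c⟩ <;> simp [E3, a, b, c]

theorem rule37_rule45_same_fixed_points (n : ℕ) (hn : 0 < n) (x : ZMod n → Bool) :
    (IsFixedConfig n rule37 x ↔ IsFixedConfig n rule45 x) ∧
    (IsFixedConfig n rule37 x ↔
      (3 ∣ n ∧ ∃ k < 3, ∀ i : ZMod n, x i = decide ((i.val + k) % 3 = 2))) := by
  constructor
  · rw [rule37_char, rule45_char]
  · rw [rule37_char, E3_iff_form n hn x]
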